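/- Let q ≥ 2, 1 ≤ z < q, h = ⌊(q−1)/(q−z)⌋, and for v ∈ [0,q), ε ∈ [0,h) define G_{v,ε} = { v+1+ε(q−z), …, v+(q−z)+ε(q−z) } mod q. Then |G_{v,ε}| = q−z, G_{v,ε} does not contain v, and for fixed v the sets G_{v,0}, …, G_{v,h−1} are pairwise disjoint. -/
import Mathlib

lemma stmt10_key (q v o1 o2 : ℕ) (h1 : o1 < q) (h2 : o2 < q)
    (heq : (v + o1) % q = (v + o2) % q) : o1 = o2 := by
  have h3 : o1 % q = o2 % q := Nat.ModEq.add_left_cancel' v heq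
  rw [Nat.mod_eq_of_lt h1, Nat.mod_eq_of_lt h2] at h3
  exact h3

/-- For `q ≥ 2`, `1 ≤ z < q`, `h = ⌊(q-1)/(q-z)⌋` and
`G_{v,ε} = {(v + i + ε(q-z)) mod q : 1 ≤ i ≤ q-z}`:
`|G_{v,ε}| = q - z`, `v ∉ G_{v,ε}`, and for fixed `v` the sets `G_{v,0}, …, G_{v,h-1}`
are pairwise disjoint. -/
theorem stmt10 (q z : ℕ) (hq : 2 ≤ q) (hz1 : 1 ≤ z) (hzq : z < q) :
    let h := (q - 1) / (q - z)
    let G : ℕ → ℕ → Finset ℕ :=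
      fun v ε => (Finset.Icc 1 (q - z)).image (fun i => (v + i + ε * (q - z)) % q)
    (∀ v < q, ∀ ε < h, (G v ε).card = q - z ∧ v ∉ G v ε) ∧
    (∀ v < q, ∀ ε1 < h, ∀ ε2 < h, ε1 ≠ ε2 → Disjoint (G v ε1) (G v ε2)) := by
  intro h G
  have hdiv : h * (q - z) ≤ q - 1 := Nat.div_mul_le_self _ _
  -- bound on offsets
  have hbound : ∀ ε < h, ∀ i ∈ Finset.Icc 1 (q - z), i + ε * (q - z) ≤ q - 1 := by
    intro ε hε i hi
    rw [Finset.mem_Icc] at hi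
    have : (ε + 1) * (q - z) ≤ h * (q - z) :=
      Nat.mul_le_mul_right _ (by omega)
    nlinarith [hi.2]
  constructor
  · intro v hv ε hε
    constructor
    · rw [Finset.card_image_of_injOn, Nat.card_Icc]
      · omega
      intro i1 h1 i2 h2 heq
      have b1 := hbound ε hε i1 h1
      have b2 := hbound ε hε i2 h2
      have := stmt10_key q v (i1 + ε * (q - z)) (i2 + ε * (q - z))
        (by omega) (by omega) (by simpa [add_assoc] using heq)
      omega
    · intro hmem
      rw [Finset.mem_image] at hmem
      obtain ⟨i, hi, heq⟩ := hmem
      have b := hbound ε hε i hi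
      rw [Finset.mem_Icc] at hi
      have hv' : (v + 0) % q = (v + (i + ε * (q - z))) % q := by
        rw [add_zero, Nat.mod_eq_of_lt hv, ← add_assoc, heq]
      have := stmt10_key q v 0 (i + ε * (q - z)) (by omega) (by omega) hv'
      omega
  · intro v hv ε1 hε1 ε2 hε2 hne
    rw [Finset.disjoint_left]
    intro a ha1 ha2
    rw [Finset.mem_image] at ha1 ha2
    obtain ⟨i1, hi1, he1⟩ := ha1
    obtain ⟨i2, hi2, he2⟩ := ha2
    have b1 := hbound ε1 hε1 i1 hi1
    have b2 := hbound ε2 hε2 i2 hi2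
    rw [Finset.mem_Icc] at hi1 hi2
    have heq : (v + (i1 + ε1 * (q - z))) % q = (v + (i2 + ε2 * (q - z))) % q := by
      rw [← add_assoc, ← add_assoc, he1, he2]
    have := stmt10_key q v _ _ (by omega) (by omega) heq
    -- i1 + ε1*(q-z) = i2 + ε2*(q-z), with 1 ≤ i ≤ q-z forces ε1 = ε2
    rcases Nat.lt_or_ge ε1 ε2 with hlt | hge
    · have : (ε1 + 1) * (q - z) ≤ ε2 * (q - z) := Nat.mul_le_mul_right _ (by omega)
      nlinarith [hi1.1, hi1.2, hi2.1, hi2.2]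
    · have hlt : ε2 < ε1 := by omega
      have : (ε2 + 1) * (q - z) ≤ ε1 * (q - z) := Nat.mul_le_mul_right _ (by omega)
      nlinarith [hi1.1, hi1.2, hi2.1, hi2.2]
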